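/- arXiv:2511.14628 — 2 statements merged into one kernel-verified Lean document; each statement's English description precedes it below -/
import Mathlib

section
/- Let (E, d) be a metric space, C : E → ℝ an L-Lipschitz function attaining its minimum C* = min_{x ∈ E} C(x) at x* ∈ E, 𝒞 ⊆ E a finite set, r > 0, R ≥ 0, and for each φ ∈ 𝒞 let Ĉ(φ) ∈ ℝ satisfy |Ĉ(φ) − C(φ)| ≤ R. Suppose some ζ ∈ 𝒞 has d(ζ, x*) ≤ r. Let 𝒞_keep = {θ ∈ 𝒞 : Ĉ(θ) − R ≤ min_{φ ∈ 𝒞}(Ĉ(φ) + R) + L·r}. Then every kept center θ ∈ 𝒞_keep satisfies C(θ) ≤ C* + 2L·r + 4R, and every point x ∈ E with d(x, θ) ≤ r for some θ ∈ 𝒞_keep satisfies C(x) ≤ C* + 3L·r + 4R. -/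
/-- (Per-round accuracy of the survivor set.)
If `C` is `L`-Lipschitz with global minimum `C* = C(x*)` over `E`, estimates at net
points are accurate to within `R`, and some `ζ ∈ 𝒞` lies within `r` of `x*`, then
every kept center `θ` (i.e. `Ĉ(θ) − R ≤ min_{φ ∈ 𝒞}(Ĉ(φ) + R) + L·r`) satisfies
`C(θ) ≤ C* + 2L·r + 4R`, and every point within distance `r` of a kept center
satisfies `C(x) ≤ C* + 3L·r + 4R`. -/
theorem statement_13 {E : Type*} [MetricSpace E]
    (C : E → ℝ) (L : ℝ) (hL : 0 ≤ L)
    (hLip : ∀ x y, |C x - C y| ≤ L * dist x y)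
    (xstar : E) (hmin : ∀ y, C xstar ≤ C y)
    (𝒞 : Finset E) (hne : 𝒞.Nonempty)
    (r R : ℝ) (hr : 0 < r) (hR : 0 ≤ R)
    (Chat : E → ℝ) (hacc : ∀ φ ∈ 𝒞, |Chat φ - C φ| ≤ R)
    (ζ : E) (hζ : ζ ∈ 𝒞) (hclose : dist ζ xstar ≤ r) :
    (∀ θ ∈ 𝒞, Chat θ - R ≤ 𝒞.inf' hne (fun φ => Chat φ + R) + L * r →
        C θ ≤ C xstar + 2 * L * r + 4 * R)
    ∧ (∀ θ ∈ 𝒞, Chat θ - R ≤ 𝒞.inf' hne (fun φ => Chat φ + R) + L * r →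
        ∀ x : E, dist x θ ≤ r → C x ≤ C xstar + 3 * L * r + 4 * R) := by
  have key : ∀ θ ∈ 𝒞, Chat θ - R ≤ 𝒞.inf' hne (fun φ => Chat φ + R) + L * r →
      C θ ≤ C xstar + 2 * L * r + 4 * R := by
    intro θ hθ hkeep
    have h1 : C θ ≤ Chat θ + R := by
      have := abs_le.mp (hacc θ hθ); linarith [this.1, this.2]
    have h2 : 𝒞.inf' hne (fun φ => Chat φ + R) ≤ Chat ζ + R :=
      Finset.inf'_le _ hζ
    have h3 : Chat ζ ≤ C ζ + R := by
      have := abs_le.mp (hacc ζ hζ); linarith [this.1, this.2]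
    have h4 : C ζ ≤ C xstar + L * r := by
      have := abs_le.mp (hLip ζ xstar)
      nlinarith [mul_le_mul_of_nonneg_left hclose hL]
    linarith
  refine ⟨key, fun θ hθ hkeep x hx => ?_⟩
  have h5 : C x ≤ C θ + L * r := by
    have := abs_le.mp (hLip x θ)
    nlinarith [mul_le_mul_of_nonneg_left hx hL]
  have := key θ hθ hkeep
  linarith
end

section
/- Let (𝕋, d) be a metric space and C : 𝕋 → ℝ an L-Lipschitz function attaining its global minimum C* at x* ∈ 𝕋. Let E^(1), …, E^(ℓ) ⊆ 𝕋 be subsets, and for each j let 𝒞^(j) ⊆ E^(j) be a finite set, r > 0, R ≥ 0, and Ĉ^(j)(φ) ∈ ℝ with |Ĉ^(j)(φ) − C(φ)| ≤ R for all φ ∈ 𝒞^(j). Suppose: (i) there is an index j_hit with x* ∈ E^(j_hit) and some ζ ∈ 𝒞^(j_hit) with d(ζ, x*) ≤ r; (ii) for each j, every point of the survivor set S^(j) ⊆ E^(j) is within distance r of some center θ ∈ 𝒞^(j) satisfying Ĉ^(j)(θ) − R ≤ min_{φ ∈ 𝒞^(j)}(Ĉ^(j)(φ) + R) + L·r. Define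 Ĉ_min = min_j min_{θ ∈ 𝒞^(j)} Ĉ^(j)(θ), β = L·r + 2R, and J_keep = {j : ∃ θ ∈ 𝒞^(j), Ĉ^(j)(θ) ≤ Ĉ_min + β}. Then: (1) |Ĉ_min − C*| ≤ L·r + R; (2) j_hit ∈ J_keep; (3) for every j ∈ J_keep, min_{x ∈ E^(j)} C(x) ≤ C* + 2L·r + 4R; and (4) every x ∈ ⋃_{j ∈ J_keep} S^(j) satisfies C(x) ≤ C* + 5L·r + 8R. -/
/-- (Multi-flat selection guarantee of ALeT.)
On each flat `E^(j)` with terminal `r`-net `𝒞^(j)`, noisy estimates accurate to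
within `R`, and survivor set `S^(j)` consisting of points within `r` of kept
centers, suppose some flat `E^(j_hit)` contains the global minimizer `x*` together
with a net point `ζ` within distance `r` of it. With
`Ĉ_min = min_j min_{θ ∈ 𝒞^(j)} Ĉ^(j)(θ)` and selection band `β = L·r + 2R`:
(1) `|Ĉ_min − C*| ≤ L·r + R`; (2) the hitting flat is kept; (3) every kept flat
contains a point with `C ≤ C* + 2L·r + 4R`; and (4) every survivor point of a kept
flat satisfies `C ≤ C* + 5L·r + 8R`. -/
theorem statement_17 {T : Type*} [MetricSpace T]
    (C : T → ℝ) (L : ℝ) (hL : 0 ≤ L)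
    (hLip : ∀ x y, |C x - C y| ≤ L * dist x y)
    (xstar : T) (hmin : ∀ y, C xstar ≤ C y)
    (ℓ : ℕ) (Eflat : Fin ℓ → Set T)
    (net : Fin ℓ → Finset T)
    (hnetsub : ∀ j, ↑(net j) ⊆ Eflat j)
    (hnetne : ∀ j, (net j).Nonempty)
    (r R : ℝ) (hr : 0 < r) (hR : 0 ≤ R)
    (Chat : Fin ℓ → T → ℝ)
    (hacc : ∀ j, ∀ φ ∈ net j, |Chat j φ - C φ| ≤ R)
    (S : Fin ℓ → Set T) (hSsub : ∀ j, S j ⊆ Eflat j)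
    (hsurv : ∀ j, ∀ x ∈ S j, ∃ θ ∈ net j, dist x θ ≤ r ∧
        Chat j θ - R ≤ (net j).inf' (hnetne j) (fun φ => Chat j φ + R) + L * r)
    (jhit : Fin ℓ) (hhit : xstar ∈ Eflat jhit)
    (ζ : T) (hζ : ζ ∈ net jhit) (hζclose : dist ζ xstar ≤ r) :
    ∃ Cmin : ℝ,
      Cmin = Finset.univ.inf' ⟨jhit, Finset.mem_univ jhit⟩
          (fun j => (net j).inf' (hnetne j) (Chat j)) ∧
      |Cmin - C xstar| ≤ L * r + R ∧
      (∃ θ ∈ net jhit, Chat jhit θ ≤ Cmin + (L * r + 2 * R)) ∧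
      (∀ j : Fin ℓ, (∃ θ ∈ net j, Chat j θ ≤ Cmin + (L * r + 2 * R)) →
        ∃ x ∈ Eflat j, C x ≤ C xstar + 2 * L * r + 4 * R) ∧
      (∀ j : Fin ℓ, (∃ θ ∈ net j, Chat j θ ≤ Cmin + (L * r + 2 * R)) →
        ∀ x ∈ S j, C x ≤ C xstar + 5 * L * r + 8 * R) := by
  set Cmin := Finset.univ.inf' ⟨jhit, Finset.mem_univ jhit⟩
      (fun j => (net j).inf' (hnetne j) (Chat j)) with hCmin
  have hCminle : ∀ j, ∀ θ ∈ net j, Cmin ≤ Chat j θ := by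
    intro j θ hθ
    exact le_trans (Finset.inf'_le _ (Finset.mem_univ j)) (Finset.inf'_le _ hθ)
  have hlb : C xstar - R ≤ Cmin := by
    apply Finset.le_inf'
    intro j _
    apply Finset.le_inf'
    intro θ hθ
    have h1 := abs_le.mp (hacc j θ hθ)
    have h2 := hmin θ
    linarith [h1.2]
  have hζacc := abs_le.mp (hacc jhit ζ hζ)
  have hζlip : |C ζ - C xstar| ≤ L * r :=
    le_trans (hLip ζ xstar) (by nlinarith [hLip ζ xstar])
  have hζlip' := abs_le.mp hζlip
  have hub : Cmin ≤ C xstar + L * r + R := by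
    have := hCminle jhit ζ hζ
    linarith [hζacc.1]
  refine ⟨Cmin, rfl, ?_, ⟨ζ, hζ, by linarith [hζacc.1]⟩, ?_, ?_⟩
  · rw [abs_le]; constructor <;> linarith
  · rintro j ⟨θ, hθ, hθle⟩
    refine ⟨θ, hnetsub j hθ, ?_⟩
    have := abs_le.mp (hacc j θ hθ)
    linarith [this.2]
  · rintro j ⟨θ', hθ', hθ'le⟩ x hx
    obtain ⟨θ, hθ, hdist, hband⟩ := hsurv j x hx
    have h1 : (net j).inf' (hnetne j) (fun φ => Chat j φ + R) ≤ Chat j θ' + R :=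
      Finset.inf'_le _ hθ'
    have h2 := abs_le.mp (hacc j θ hθ)
    have h3 : |C x - C θ| ≤ L * r :=
      le_trans (hLip x θ) (by nlinarith [hLip x θ])
    have h4 := abs_le.mp h3
    linarith [h2.2, h4.2]
end
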